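/- For every integer k ≥ 1, cos(π/(2·(4k+7))) / (cos(π/(4k+7)) − sin(3π/(2·(4k+7)))) < (3·cos(π/(2·(4k+3))) + cos(3π/(2·(4k+3))) + sin(π/(4k+3)) + sin(2π/(4k+3)) + sin(3π/(4k+3))) / (3·cos(π/(4k+3)) + cos(3π/(4k+3))). -/

import Mathlib

open Real

lemma sin_lb' {t : ℝ} (h0 : 0 ≤ t) (h1 : t ≤ 1) : t - t^3/6 - t^4*(5/96) ≤ sin t := by
  have h := neg_le_of_abs_le (Real.sin_bound (by rwa [abs_of_nonneg h0]))
  have h5 : t^5 ≤ t^4 := by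
    have := mul_nonneg (pow_nonneg h0 4) (sub_nonneg.2 h1); nlinarith
  have h4 := pow_nonneg h0 4
  rw [abs_of_nonneg h0] at h; linarith

lemma cos_ub' {t : ℝ} (h0 : 0 ≤ t) (h1 : t ≤ 1) : cos t ≤ 1 - t^2/2 + t^4*(5/96) := by
  have h := le_of_abs_le (Real.cos_bound (by rwa [abs_of_nonneg h0]))
  rw [abs_of_nonneg h0] at h; linarith

lemma poly_key (x y : ℝ) (hx0 : 0 < x) (hy0 : 0 < y) (hxy : x ≤ y)
    (h2 : 11*y ≤ 15*x) (h1 : 160*(x*y) ≤ 63*(y - x)) (hyu : y ≤ 0.143) :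
    4 - 24*y^2 + 70*y^4 < (4 + 12*y - 6*y^2 - 48*y^3 - (245/3)*y^4) * (1 - 3*x - 2*x^2) := by
  have hd : 0 ≤ y - x := by linarith
  have p1 : 160*(x*y)*y ≤ 63*((y-x)*y) := by
    have := mul_le_mul_of_nonneg_right h1 hy0.le; linarith
  have p2 : 0 ≤ (4/15*y - (y-x))*(y-x) := mul_nonneg (by linarith) hd
  have p3 : 0 ≤ (15*x-11*y)*y^2 := mul_nonneg (by linarith) (sq_nonneg y)
  have p4 : 0 ≤ ((15*x-11*y)*y^2)*y := mul_nonneg p3 hy0.le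
  have p5 : 0 ≤ ((y-x)*(y+x))*y := mul_nonneg (mul_nonneg hd (by linarith)) hy0.le
  have p6 : 0 ≤ ((0.143-y)*y^2)*y := mul_nonneg (mul_nonneg (by linarith) (sq_nonneg y)) hy0.le
  have p7 : 0 ≤ (0.143-y)*y^2 := mul_nonneg (by linarith) (sq_nonneg y)
  have p8 : 0 ≤ x^2*y^2 := by positivity
  have p9 : 0 ≤ x^2*y^2*y := by positivity
  have p10 : 0 ≤ x*y^4 := by positivity
  have p11 : 0 ≤ x^2*y^4 := by positivity
  have py2 : 0 < y^2 := by positivity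
  nlinarith [p1, p2, p3, p4, p5, p6, p7, p8, p9, p10, p11, h1, py2]

set_option maxHeartbeats 1000000 in
lemma key (x y : ℝ) (hx0 : 0 < x) (hy0 : 0 < y)
    (hrel : x * (π + 8*y) = π * y) (hyu : y ≤ π/22) :
    cos x / (cos (2*x) - sin (3*x)) <
      (3*cos y + cos (3*y) + sin (2*y) + sin (4*y) + sin (6*y)) / (3*cos (2*y) + cos (6*y)) := by
  have hπl : 3.141592 < π := Real.pi_gt_d6
  have hπu : π < 3.141593 := Real.pi_lt_d6
  have hy143 : y ≤ 0.143 := by linarith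
  have hxyprod : 0 < x*y := mul_pos hx0 hy0
  have hrel' : π*(y-x) = 8*(x*y) := by linear_combination -hrel
  have hxy : x < y := by nlinarith
  have h2 : 11*y ≤ 15*x := by nlinarith [mul_nonneg hy0.le (sub_nonneg.2 (by linarith : 22*y ≤ π))]
  have h1 : 160*(x*y) ≤ 63*(y - x) := by nlinarith
  have hx143 : x ≤ 0.143 := by linarith
  have hy2 : y^2 ≤ 0.143*y := by nlinarith
  have hy2' : y^2 ≤ 0.020449 := by nlinarith
  have hy3 : y^3 ≤ 0.020449*y := by nlinarith [sq_nonneg y]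
  have hy3' : y^3 ≤ 0.00293 := by nlinarith [sq_nonneg y]
  have hy4 : y^4 ≤ 0.00293*y := by nlinarith [pow_pos hy0 3]
  have hy4' : y^4 ≤ 0.000419 := by nlinarith [pow_pos hy0 3]
  have hx2 : x^2 ≤ 0.020449 := by nlinarith
  have hApos : 0 < 1 - 3*x - 2*x^2 := by linarith
  have hcos2x : 1 - 2*x^2 ≤ cos (2*x) := by
    have := Real.one_sub_sq_div_two_le_cos (x := 2*x); nlinarith [this]
  have hsin3x : sin (3*x) < 3*x := Real.sin_lt (by linarith)
  have hD : 1 - 3*x - 2*x^2 < cos (2*x) - sin (3*x) := by linarith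
  have hLHS : cos x / (cos (2*x) - sin (3*x)) < 1 / (1 - 3*x - 2*x^2) := by
    rw [div_lt_div_iff₀ (by linarith) hApos]
    have hp : cos x * (1 - 3*x - 2*x^2) ≤ 1 - 3*x - 2*x^2 :=
      mul_le_of_le_one_left hApos.le (Real.cos_le_one x)
    linarith
  have h2y : (0:ℝ) ≤ 2*y := by linarith
  have h2y1 : 2*y ≤ 1 := by linarith
  have hs2 := sin_lb' h2y h2y1
  have hs4 := sin_lb' (by linarith : (0:ℝ) ≤ 4*y) (by linarith : 4*y ≤ 1)
  have hs6 := sin_lb' (by linarith : (0:ℝ) ≤ 6*y) (by linarith : 6*y ≤ 1)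
  have hc1 := Real.one_sub_sq_div_two_le_cos (x := y)
  have hc3 := Real.one_sub_sq_div_two_le_cos (x := 3*y)
  have hc2u := cos_ub' h2y h2y1
  have hc6u := cos_ub' (by linarith : (0:ℝ) ≤ 6*y) (by linarith : 6*y ≤ 1)
  have hc2l := Real.one_sub_sq_div_two_le_cos (x := 2*y)
  have hc6l := Real.one_sub_sq_div_two_le_cos (x := 6*y)
  set N := 3*cos y + cos (3*y) + sin (2*y) + sin (4*y) + sin (6*y) with hNdef
  set D := 3*cos (2*y) + cos (6*y) with hDdef
  have hNlb : 4 + 12*y - 6*y^2 - 48*y^3 - (245/3)*y^4 ≤ N := by rw [hNdef]; nlinarith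
  have hDpos : 0 < D := by rw [hDdef]; nlinarith
  have hDub : D ≤ 4 - 24*y^2 + 70*y^4 := by rw [hDdef]; nlinarith
  have hN'pos : 0 < 4 + 12*y - 6*y^2 - 48*y^3 - (245/3)*y^4 := by linarith
  have hD'pos : 0 < 4 - 24*y^2 + 70*y^4 := by nlinarith [pow_pos hy0 4]
  have hmid : 1 / (1 - 3*x - 2*x^2) <
      (4 + 12*y - 6*y^2 - 48*y^3 - (245/3)*y^4) / (4 - 24*y^2 + 70*y^4) := by
    rw [div_lt_div_iff₀ hApos hD'pos]
    have := poly_key x y hx0 hy0 hxy.le h2 h1 hy143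
    linarith
  have hRHS : (4 + 12*y - 6*y^2 - 48*y^3 - (245/3)*y^4) / (4 - 24*y^2 + 70*y^4) ≤ N / D := by
    rw [div_le_div_iff₀ hD'pos hDpos]
    have e1 := mul_le_mul_of_nonneg_left hDub hN'pos.le
    have e2 := mul_le_mul_of_nonneg_right hNlb hD'pos.le
    nlinarith [e1, e2]
  calc cos x / (cos (2*x) - sin (3*x)) < 1 / (1 - 3*x - 2*x^2) := hLHS
    _ < _ := hmid
    _ ≤ N / D := hRHS

set_option maxHeartbeats 1000000 in
lemma case1 :
    cos (π / 22) / (cos (π / 11) - sin (3 * π / 22)) <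
      (3 * cos (π / 14) + cos (3 * π / 14) + sin (π / 7) + sin (2 * π / 7) + sin (3 * π / 7)) /
        (3 * cos (π / 7) + cos (3 * π / 7)) := by
  have hπl : 3.141592 < π := Real.pi_gt_d6
  have hπu : π < 3.141593 := Real.pi_lt_d6
  have hπ0 : 0 < π := by linarith
  have hπ2u : π^2 ≤ 9.8696071 := by nlinarith
  have hπ2l : 9.8696 ≤ π^2 := by nlinarith
  have hπ3u : π^3 ≤ 31.00629 := by nlinarith
  have hπ4u : π^4 ≤ 97.40919 := by nlinarith
  rw [show (3*π/7 : ℝ) = π/2 - π/14 by ring, Real.sin_pi_div_two_sub, Real.cos_pi_div_two_sub]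
  have hc11 : 1 - (π/11)^2/2 ≤ cos (π/11) := Real.one_sub_sq_div_two_le_cos
  have hs322 : sin (3*π/22) < 3*π/22 := Real.sin_lt (by positivity)
  have hDpos : 0.53 < cos (π/11) - sin (3*π/22) := by nlinarith
  have hLHS : cos (π/22) / (cos (π/11) - sin (3*π/22)) < 1.9 := by
    rw [div_lt_iff₀ (by linarith)]
    nlinarith [Real.cos_le_one (π/22)]
  have hc14 : 1 - (π/14)^2/2 ≤ cos (π/14) := Real.one_sub_sq_div_two_le_cos
  have hc314 : 1 - (3*π/14)^2/2 ≤ cos (3*π/14) := Real.one_sub_sq_div_two_le_cos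
  have hs7 : π/7 - (π/7)^3/6 - (π/7)^4*(5/96) ≤ sin (π/7) :=
    sin_lb' (by positivity) (by nlinarith)
  have hs27 : 2*π/7 - (2*π/7)^3/6 - (2*π/7)^4*(5/96) ≤ sin (2*π/7) :=
    sin_lb' (by positivity) (by nlinarith)
  have hc7u : cos (π/7) ≤ 1 - (π/7)^2/2 + (π/7)^4*(5/96) :=
    cos_ub' (by positivity) (by nlinarith)
  have hc7l : 1 - (π/7)^2/2 ≤ cos (π/7) := Real.one_sub_sq_div_two_le_cos
  have hs14u : sin (π/14) < π/14 := Real.sin_lt (by positivity)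
  have hs14l : 0 < sin (π/14) := Real.sin_pos_of_pos_of_lt_pi (by positivity) (by linarith)
  have hNum : 5.847 ≤ 3 * cos (π/14) + cos (3*π/14) + sin (π/7) + sin (2*π/7) + cos (π/14) := by
    nlinarith
  have hDen1 : 3 * cos (π/7) + sin (π/14) ≤ 2.929 := by nlinarith
  have hDen0 : 0 < 3 * cos (π/7) + sin (π/14) := by nlinarith
  have hRHS : (1.9:ℝ) < (3 * cos (π/14) + cos (3*π/14) + sin (π/7) + sin (2*π/7) + cos (π/14)) /
      (3 * cos (π/7) + sin (π/14)) := by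
    rw [lt_div_iff₀ hDen0]
    nlinarith
  linarith

theorem ub_4kplus7_lt_lb_4kplus3 (k : ℕ) (hk : 1 ≤ k) :
    cos (π / (2 * (4 * (k : ℝ) + 7))) /
        (cos (π / (4 * (k : ℝ) + 7)) - sin (3 * π / (2 * (4 * (k : ℝ) + 7)))) <
      (3 * cos (π / (2 * (4 * (k : ℝ) + 3))) + cos (3 * π / (2 * (4 * (k : ℝ) + 3))) +
          sin (π / (4 * (k : ℝ) + 3)) + sin (2 * π / (4 * (k : ℝ) + 3)) +
          sin (3 * π / (4 * (k : ℝ) + 3))) /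
        (3 * cos (π / (4 * (k : ℝ) + 3)) + cos (3 * π / (4 * (k : ℝ) + 3))) := by
  have hπ0 : 0 < π := Real.pi_pos
  rcases Nat.lt_or_ge k 2 with h | h
  · have hk1 : k = 1 := by omega
    subst hk1
    norm_num
    exact case1
  · have hk2 : (2:ℝ) ≤ (k:ℝ) := by exact_mod_cast h
    have hn0 : (0:ℝ) < 4*(k:ℝ)+7 := by linarith
    have hm0 : (0:ℝ) < 4*(k:ℝ)+3 := by linarith
    have e1 : π/(4*(k:ℝ)+7) = 2*(π/(2*(4*(k:ℝ)+7))) := by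
      field_simp
    have e2 : 3*π/(2*(4*(k:ℝ)+7)) = 3*(π/(2*(4*(k:ℝ)+7))) := by ring
    have e3 : 3*π/(2*(4*(k:ℝ)+3)) = 3*(π/(2*(4*(k:ℝ)+3))) := by ring
    have e4 : π/(4*(k:ℝ)+3) = 2*(π/(2*(4*(k:ℝ)+3))) := by
      field_simp
    have e5 : 2*π/(4*(k:ℝ)+3) = 4*(π/(2*(4*(k:ℝ)+3))) := by
      field_simp; ring
    have e6 : 3*π/(4*(k:ℝ)+3) = 6*(π/(2*(4*(k:ℝ)+3))) := by
      field_simp; ring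
    rw [e1, e2, e3, e4, e5, e6]
    apply key
    · positivity
    · positivity
    · field_simp
      ring
    · rw [div_le_div_iff₀ (by linarith) (by norm_num)]
      nlinarith
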